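/- Let φ be shiftable on ℝ with φ(y − τ) = ∑_{n=1}^N c_n(τ)·φ_n(y) for all y, τ, and assume φ is even. Then for any integrable f and any x, ∫_{−T}^{T} φ(y)·f(x − y) dy = ∑_{n=1}^N c_n(x)·∫_{x−T}^{x+T} φ_n(u)·f(u) du. That is, the spatial filter at x is a linear combination, with coefficients c_n(x), of moving sums of the fixed functions φ_n·f over the window [x−T, x+T]. -/
import Mathlib

theorem spatial_filter_moving_sum (T : ℝ) (hT : 0 < T) (N : ℕ)
    (φ : ℝ → ℝ) (φs : Fin N → ℝ → ℝ) (c : ℝ → Fin N → ℝ)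
    (hshift : ∀ τ y : ℝ, φ (y - τ) = ∑ n, c τ n * φs n y)
    (heven : ∀ y : ℝ, φ (-y) = φ y)
    (f : ℝ → ℝ) (hf : MeasureTheory.Integrable f)
    (x : ℝ)
    (hint : ∀ n, IntervalIntegrable (fun u => φs n u * f u)
      MeasureTheory.volume (x - T) (x + T)) :
    ∫ y in (-T)..T, φ y * f (x - y) =
      ∑ n, c x n * ∫ u in (x - T)..(x + T), φs n u * f u := by
  have h1 : ∫ y in (-T)..T, φ y * f (x - y)
      = ∫ u in (x - T)..(x + T), φ (x - u) * f u := by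
    have := intervalIntegral.integral_comp_sub_left
      (a := -T) (b := T) (fun u => φ (x - u) * f u) x
    simp only [sub_neg_eq_add, sub_sub_cancel] at this
    exact this
  rw [h1]
  have h2 : ∀ u, φ (x - u) * f u = ∑ n, c x n * (φs n u * f u) := by
    intro u
    rw [← heven, neg_sub, hshift x u, Finset.sum_mul]
    simp [mul_assoc]
  simp_rw [h2]
  rw [intervalIntegral.integral_finset_sum]
  · simp_rw [intervalIntegral.integral_const_mul]
  · intro n _
    exact (hint n).const_mul _
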